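/- Every weighted system whose weight algebra is a superior M-monoid is closed; more precisely, if (K,⪯) is a total order, (K,min,0,Ω,inf) is a complete and distributive M-monoid in which ⊕ is the binary minimum with respect to ⪯ (so 0 is the ⪯-greatest element), the infinitary sum of any countable family is its infimum (which exists in K), and every ω ∈ Ω is superior (monotone with respect to ⪯ in each argument, and max_⪯{k₁,…,k_k} ⪯ ω(k₁,…,k_k) for all arguments), then every weighted system (N,R,wt,K) is 0-closed. -/

import Mathlib

open scoped Classical

/-- Trees over a ranked set `R` with arity function `ar`:
`RT.node r ts` is a tree whose root is labelled `r` and which has `ar r` children. -/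
inductive RT (R : Type) (ar : R → ℕ) : Type
  | node (r : R) (children : Fin (ar r) → RT R ar)

namespace RT

variable {R : Type} {ar : R → ℕ}

/-- The rule labelling the root of a tree. -/
def rootRule : RT R ar → R
  | node r _ => r

/-- The subtree at a position (`none` if the position is not a position of the tree). -/
def subAt : RT R ar → List ℕ → Option (RT R ar)
  | t, [] => some t
  | node r ts, i :: p => if h : i < ar r then subAt (ts ⟨i, h⟩) p else none

/-- Replace the subtree at a position by another tree. -/
def replaceAt : RT R ar → List ℕ → RT R ar → RT R ar
  | _, [], s => s
  | node r ts, i :: p, s => node r fun j => if j.1 = i then replaceAt (ts j) p s else ts j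

/-- The sequence of rule labels from the root to a position, inclusive. -/
def seqTo : RT R ar → List ℕ → Option (List R)
  | node r _, [] => some [r]
  | node r ts, i :: p => if h : i < ar r then (seqTo (ts ⟨i, h⟩) p).map (fun l => r :: l) else none

/-- `p` is a leaf position of `d`, i.e. a valid position with no child positions. -/
def LeafAt (d : RT R ar) (p : List ℕ) : Prop :=
  ∃ t, subAt d p = some t ∧ ar t.rootRule = 0

/-- The height of a tree: `0` on nullary nodes, otherwise `1` plus the maximum height
of the direct subtrees. -/
def height : RT R ar → ℕ
  | node _ ts => Finset.univ.sup fun i => height (ts i) + 1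

end RT

/-- The weight of a tree: evaluate it bottom-up, interpreting each rule `r` by the
operation `wt r`. -/
def wtval {K R : Type} {ar : R → ℕ} (wt : ∀ r : R, (Fin (ar r) → K) → K) : RT R ar → K
  | .node r ts => wt r fun i => wtval wt (ts i)

section Cyclicity

variable {R : Type} {ar : R → ℕ}

/-- A string over `R` is an elementary cycle if it has length `> 1`, its first and last
symbols coincide, and it becomes repetition-free after deleting its last (resp. first)
symbol. -/
def ElementaryCycle (w : List R) : Prop :=
  1 < w.length ∧ w.head? = w.getLast? ∧ w.dropLast.Nodup ∧ w.tail.Nodup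

/-- `ρ` is `(c,w)`-cyclic: `ρ = v₀ w v₁ ⋯ w v_c` (with `c` occurrences of the elementary
cycle `w`) where `w` is not an infix of any `vᵢ`. -/
def CWCyclic (c : ℕ) (w ρ : List R) : Prop :=
  ElementaryCycle w ∧
  ∃ v : ℕ → List R,
    ρ = v 0 ++ (((List.range c).map fun i => w ++ v (i + 1)).flatten) ∧
    ∀ i ≤ c, ¬ w <:+: v i

/-- `ρ` is `c`-cyclic: it is `(c,w)`-cyclic for some elementary cycle `w` and not
`(c',w')`-cyclic for any `c' > c` and elementary cycle `w'`. -/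
def CCyclic (c : ℕ) (ρ : List R) : Prop :=
  (∃ w, CWCyclic c w ρ) ∧ ∀ c', c < c' → ∀ w', ¬ CWCyclic c' w' ρ

/-- The leaf position `p` of `d` is `(c,w)`-cyclic. -/
def LeafCW (c : ℕ) (w : List R) (d : RT R ar) (p : List ℕ) : Prop :=
  RT.LeafAt d p ∧ ∃ ρ, RT.seqTo d p = some ρ ∧ CWCyclic c w ρ

/-- The leaf position `p` of `d` is `c`-cyclic. -/
def LeafC (c : ℕ) (d : RT R ar) (p : List ℕ) : Prop :=
  RT.LeafAt d p ∧ ∃ ρ, RT.seqTo d p = some ρ ∧ CCyclic c ρ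

/-- The tree `d` is `c`-cyclic: some leaf of `d` is `c`-cyclic and no leaf of `d` is
`c'`-cyclic for any `c' > c`. -/
def TreeC (c : ℕ) (d : RT R ar) : Prop :=
  (∃ p, LeafC c d p) ∧ ∀ c', c < c' → ∀ p, ¬ LeafC c' d p

/-- `d ⊢_w d'` : there are positions `p ≤ p'` of `d` whose connecting label sequence is
`w`, and `d'` is obtained by replacing the subtree at `p` by the subtree at `p'`.
(The position `p'` is `p ++ q`.) -/
def CutW (w : List R) (d d' : RT R ar) : Prop :=
  ∃ p q t s, RT.subAt d p = some t ∧ RT.subAt t q = some s ∧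
    RT.seqTo t q = some w ∧ d' = RT.replaceAt d p s

/-- `d ⊢ d'` : `d ⊢_w d'` for some elementary cycle `w`. -/
def Cut (d d' : RT R ar) : Prop := ∃ w, ElementaryCycle w ∧ CutW w d d'

/-- The set of `w`-cutout trees of `d`. -/
def cotreesW (w : List R) (d : RT R ar) : Set (RT R ar) := {d' | Relation.TransGen (CutW w) d d'}

/-- The set of cutout trees of `d`. -/
def cotrees (d : RT R ar) : Set (RT R ar) := {d' | Relation.TransGen Cut d d'}

end Cyclicity

section Rules

variable {N R : Type}

/-- Well-sorted trees over a rule system given by `lhs` and `rhs`: at each node labelled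
`r`, the `i`-th child is a well-sorted tree whose root label has left-hand side equal to
the `i`-th nonterminal of `rhs r`. -/
inductive WellSorted (lhs : R → N) (rhs : R → List N) :
    RT R (fun r => (rhs r).length) → Prop
  | node (r : R) (ts : Fin (rhs r).length → RT R fun r => (rhs r).length)
      (hsort : ∀ i, lhs (ts i).rootRule = (rhs r).get i)
      (hrec : ∀ i, WellSorted lhs rhs (ts i)) : WellSorted lhs rhs (RT.node r ts)

/-- `T_R` : the set of (well-sorted) trees over the rule system. -/
def TRset (lhs : R → N) (rhs : R → List N) : Set (RT R fun r => (rhs r).length) :=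
  {d | WellSorted lhs rhs d}

/-- `(T_R)_A` : the set of trees of sort `A`. -/
def TRA (lhs : R → N) (rhs : R → List N) (A : N) : Set (RT R fun r => (rhs r).length) :=
  {d | WellSorted lhs rhs d ∧ lhs d.rootRule = A}

/-- `T_R^{(c)}` : the set of trees that are `c'`-cyclic for some `c' ≤ c`. -/
def TRcset (lhs : R → N) (rhs : R → List N) (c : ℕ) : Set (RT R fun r => (rhs r).length) :=
  {d | WellSorted lhs rhs d ∧ ∃ c' ≤ c, TreeC c' d}

end Rules

/-- An infinitary sum operation on a commutative monoid `K`, turning it into a complete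
monoid: the sum of the empty family is `0`, the sum of a singleton family is its member,
the sum of a two-element family is the binary sum, and the partition law holds (every
partition of a countable index set `I` into sets indexed by `J` is given by the fibers
of a map `g : I → J`). -/
structure InfSum (K : Type) [AddCommMonoid K] where
  isum : ∀ {I : Type} [Countable I], (I → K) → K
  isum_empty : ∀ {I : Type} [Countable I] (f : I → K), IsEmpty I → isum f = 0
  isum_single : ∀ {I : Type} [Countable I] (f : I → K) (j : I), (∀ i, i = j) → isum f = f j
  isum_pair : ∀ {I : Type} [Countable I] (f : I → K) (j j' : I), j ≠ j' →
    (∀ i, i = j ∨ i = j') → isum f = f j + f j'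
  isum_partition : ∀ {I J : Type} [Countable I] [Countable J] (f : I → K) (g : I → J),
    isum f = isum fun j : J => isum fun i : {i : I // g i = j} => f i.1

section MMonoid

variable {K : Type} [AddCommMonoid K]

/-- A complete monoid is d-complete if, whenever all the partial sums `Σ_{i ≤ n} f i`
eventually equal `k`, the infinitary sum of the family equals `k`. -/
def InfSum.DComplete (S : InfSum K) : Prop :=
  ∀ (k : K) (f : ℕ → K),
    (∃ n₀ : ℕ, ∀ n, n₀ ≤ n → (∑ i ∈ Finset.range (n + 1), f i) = k) → S.isum f = k

/-- A complete monoid is completely idempotent if the infinitary sum of every constant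
family over a nonempty countable index set is that constant. -/
def InfSum.CompletelyIdempotent (S : InfSum K) : Prop :=
  ∀ (I : Type) [Countable I], Nonempty I → ∀ k : K, S.isum (fun _ : I => k) = k

/-- The family `Ω` of operation sets contains all the null (constantly `0`) operations. -/
def HasZeroOps (Ω : ∀ n : ℕ, Set ((Fin n → K) → K)) : Prop :=
  ∀ n : ℕ, (fun _ : Fin n → K => (0 : K)) ∈ Ω n

/-- Distributivity of an M-monoid: every operation in `Ω` distributes over `+` in each
argument, and `0` is absorbing for every operation in `Ω`. -/
def DistributiveOps (Ω : ∀ n : ℕ, Set ((Fin n → K) → K)) : Prop :=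
  ∀ n : ℕ, ∀ ω ∈ Ω n,
    (∀ (x : Fin n → K) (i : Fin n) (a b : K),
      ω (Function.update x i (a + b)) = ω (Function.update x i a) + ω (Function.update x i b)) ∧
    (∀ x : Fin n → K, (∃ i, x i = 0) → ω x = 0)

end MMonoid

/-- The weighted system `(N, R, wt, K)` is `c`-closed: for every well-sorted tree `d` and
elementary cycle `w` such that some leaf position of `d` is `(c+1,w)`-cyclic, the weight
of `d` is subsumed by the (finite) `⊕`-sum of the weights of the `w`-cutout trees of `d`. -/
def CClosed {K : Type} [AddCommMonoid K] {N R : Type} (lhs : R → N) (rhs : R → List N)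
    (wt : ∀ r : R, (Fin (rhs r).length → K) → K) (c : ℕ) : Prop :=
  ∀ d : RT R (fun r => (rhs r).length), WellSorted lhs rhs d →
    ∀ w : List R, ElementaryCycle w → (∃ p, LeafCW (c + 1) w d p) →
      (wtval wt d + ∑ᶠ d' ∈ cotreesW w d, wtval wt d') = ∑ᶠ d' ∈ cotreesW w d, wtval wt d'

section Aux

variable {R : Type} {ar : R → ℕ}

/-- Number of nodes of a tree. -/
def RTsize : RT R ar → ℕ
  | .node _ ts => 1 + ∑ i, RTsize (ts i)

lemma RTsize_node (r : R) (ts : Fin (ar r) → RT R ar) :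
    RTsize (RT.node r ts) = 1 + ∑ i, RTsize (ts i) := rfl

lemma one_le_RTsize (t : RT R ar) : 1 ≤ RTsize t := by
  cases t with
  | node r ts => rw [RTsize_node]; exact Nat.le_add_right 1 _

lemma seqTo_length : ∀ (p : List ℕ) (d : RT R ar) (ρ : List R),
    RT.seqTo d p = some ρ → ρ.length = p.length + 1 := by
  intro p
  induction p with
  | nil =>
    intro d ρ h
    cases d with
    | node r ts =>
      simp only [RT.seqTo, Option.some.injEq] at h
      subst h; simp
  | cons i p ih =>
    intro d ρ h
    cases d with
    | node r ts =>
      simp only [RT.seqTo] at h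
      split at h
      · obtain ⟨l, hl, hρ⟩ := Option.map_eq_some_iff.mp h
        subst hρ
        simp [ih _ l hl]
      · exact absurd h (by simp)

lemma seqTo_exists_sub : ∀ (p : List ℕ) (d : RT R ar) (ρ : List R) (n : ℕ),
    RT.seqTo d p = some ρ → n ≤ p.length →
    ∃ t, RT.subAt d (p.take n) = some t ∧ RT.seqTo t (p.drop n) = some (ρ.drop n) := by
  intro p
  induction p with
  | nil =>
    intro d ρ n h hn
    have hn0 : n = 0 := by simpa using hn
    subst hn0
    simp only [List.take_nil, List.drop_nil, List.drop_zero]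
    exact ⟨d, by simp [RT.subAt], h⟩
  | cons i p ih =>
    intro d ρ n h hn
    cases d with
    | node r ts =>
      simp only [RT.seqTo] at h
      split at h
      next hlt =>
        obtain ⟨l, hl, hρ⟩ := Option.map_eq_some_iff.mp h
        subst hρ
        cases n with
        | zero =>
          refine ⟨RT.node r ts, rfl, ?_⟩
          simp only [List.drop_zero, RT.seqTo, hlt, dif_pos, hl, Option.map_some]
        | succ m =>
          obtain ⟨t, h1, h2⟩ := ih (ts ⟨i, hlt⟩) l m hl (by simpa using hn)
          refine ⟨t, ?_, ?_⟩
          · simp only [List.take_succ_cons, RT.subAt, hlt, dif_pos]; exact h1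
          · simpa using h2
      · exact absurd h (by simp)

lemma seqTo_take : ∀ (p : List ℕ) (d : RT R ar) (ρ : List R) (j : ℕ),
    RT.seqTo d p = some ρ → RT.seqTo d (p.take j) = some (ρ.take (j + 1)) := by
  intro p
  induction p with
  | nil =>
    intro d ρ j h
    cases d with
    | node r ts =>
      simp only [RT.seqTo, Option.some.injEq] at h
      subst h
      simp [RT.seqTo]
  | cons i p ih =>
    intro d ρ j h
    cases d with
    | node r ts =>
      simp only [RT.seqTo] at h
      split at h
      next hlt =>
        obtain ⟨l, hl, hρ⟩ := Option.map_eq_some_iff.mp h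
        subst hρ
        cases j with
        | zero => simp [RT.seqTo]
        | succ m =>
          simp only [List.take_succ_cons, RT.seqTo, hlt, dif_pos, List.take_succ_cons,
            ih _ l m hl, Option.map_some]
      · exact absurd h (by simp)

lemma RTsize_subAt_le : ∀ (q : List ℕ) (t s : RT R ar),
    RT.subAt t q = some s → RTsize s ≤ RTsize t := by
  intro q
  induction q with
  | nil => intro t s h; simp only [RT.subAt, Option.some.injEq] at h; subst h; exact le_rfl
  | cons i q ih =>
    intro t s h
    cases t with
    | node r ts =>
      simp only [RT.subAt] at h
      split at h
      next hlt =>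
        calc RTsize s ≤ RTsize (ts ⟨i, hlt⟩) := ih _ _ h
        _ ≤ ∑ j, RTsize (ts j) := Finset.single_le_sum (f := fun j => RTsize (ts j)) (fun j _ => Nat.zero_le _)
            (Finset.mem_univ _)
        _ ≤ RTsize (RT.node r ts) := by rw [RTsize_node]; omega
      · exact absurd h (by simp)

lemma RTsize_subAt_lt : ∀ (q : List ℕ) (t s : RT R ar), q ≠ [] →
    RT.subAt t q = some s → RTsize s < RTsize t := by
  intro q t s hq h
  cases q with
  | nil => exact absurd rfl hq
  | cons i q =>
    cases t with
    | node r ts =>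
      simp only [RT.subAt] at h
      split at h
      next hlt =>
        calc RTsize s ≤ RTsize (ts ⟨i, hlt⟩) := RTsize_subAt_le _ _ _ h
        _ ≤ ∑ j, RTsize (ts j) := Finset.single_le_sum (f := fun j => RTsize (ts j)) (fun j _ => Nat.zero_le _)
            (Finset.mem_univ _)
        _ < RTsize (RT.node r ts) := by rw [RTsize_node]; omega
      · exact absurd h (by simp)

lemma RTsize_replaceAt_lt : ∀ (p : List ℕ) (d t s : RT R ar),
    RT.subAt d p = some t → RTsize s < RTsize t →
    RTsize (RT.replaceAt d p s) < RTsize d := by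
  intro p
  induction p with
  | nil =>
    intro d t s h hs
    simp only [RT.subAt, Option.some.injEq] at h
    subst h
    simpa [RT.replaceAt] using hs
  | cons i p ih =>
    intro d t s h hs
    cases d with
    | node r ts =>
      simp only [RT.subAt] at h
      split at h
      next hlt =>
        simp only [RT.replaceAt, RTsize_node]
        have hlt' := ih (ts ⟨i, hlt⟩) t s h hs
        have hsum : (∑ j, RTsize (if j.1 = i then RT.replaceAt (ts j) p s else ts j))
            < ∑ j, RTsize (ts j) := by
          refine Finset.sum_lt_sum ?_ ⟨⟨i, hlt⟩, Finset.mem_univ _, by simpa using hlt'⟩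
          intro j _
          by_cases hj : j.1 = i
          · have hje : j = ⟨i, hlt⟩ := Fin.ext hj
            subst hje
            simpa using le_of_lt hlt'
          · simp [hj]
        omega
      · exact absurd h (by simp)

lemma RT_finite_size_le [Fintype R] (n : ℕ) : {t : RT R ar | RTsize t ≤ n}.Finite := by
  induction n with
  | zero =>
    convert Set.finite_empty
    ext t
    simp only [Set.mem_setOf_eq, Set.mem_empty_iff_false, iff_false]
    have := one_le_RTsize t
    omega
  | succ n ih =>
    have hsub : {t : RT R ar | RTsize t ≤ n + 1} ⊆
        ⋃ r ∈ (Set.univ : Set R), (fun ts => RT.node r ts) ''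
          (Set.pi Set.univ fun _ : Fin (ar r) => {t : RT R ar | RTsize t ≤ n}) := by
      intro t ht
      cases t with
      | node r ts =>
        simp only [Set.mem_setOf_eq, RTsize_node] at ht
        refine Set.mem_biUnion (Set.mem_univ r) ⟨ts, ?_, rfl⟩
        intro j _
        have : RTsize (ts j) ≤ ∑ i, RTsize (ts i) :=
          Finset.single_le_sum (f := fun i => RTsize (ts i)) (fun i _ => Nat.zero_le _) (Finset.mem_univ _)
        simp only [Set.mem_setOf_eq]
        omega
    refine Set.Finite.subset ?_ hsub
    exact Set.Finite.biUnion Set.finite_univ fun r _ =>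
      Set.Finite.image _ (Set.Finite.pi fun _ => ih)

section Weights

variable {K : Type} [LinearOrder K]
variable (wt : ∀ r : R, (Fin (ar r) → K) → K)

lemma wtval_subAt_le
    (hsuper : ∀ (r : R) (x : Fin (ar r) → K) (i : Fin (ar r)), x i ≤ wt r x) :
    ∀ (q : List ℕ) (t s : RT R ar),
    RT.subAt t q = some s → wtval wt s ≤ wtval wt t := by
  intro q
  induction q with
  | nil => intro t s h; simp only [RT.subAt, Option.some.injEq] at h; subst h; exact le_rfl
  | cons i q ih =>
    intro t s h
    cases t with
    | node r ts =>
      simp only [RT.subAt] at h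
      split at h
      next hlt =>
        refine le_trans (ih _ _ h) ?_
        exact hsuper r (fun j => wtval wt (ts j)) ⟨i, hlt⟩
      · exact absurd h (by simp)

lemma wtval_replaceAt_le
    (hmono : ∀ (r : R) (x : Fin (ar r) → K) (i : Fin (ar r)) (a b : K), a ≤ b →
      wt r (Function.update x i a) ≤ wt r (Function.update x i b)) :
    ∀ (p : List ℕ) (d t s : RT R ar),
    RT.subAt d p = some t → wtval wt s ≤ wtval wt t →
    wtval wt (RT.replaceAt d p s) ≤ wtval wt d := by
  intro p
  induction p with
  | nil =>
    intro d t s h hs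
    simp only [RT.subAt, Option.some.injEq] at h
    subst h
    simpa [RT.replaceAt] using hs
  | cons i p ih =>
    intro d t s h hs
    cases d with
    | node r ts =>
      simp only [RT.subAt] at h
      split at h
      next hlt =>
        have key : (fun j => wtval wt (if j.1 = i then RT.replaceAt (ts j) p s else ts j))
            = Function.update (fun j => wtval wt (ts j)) ⟨i, hlt⟩
              (wtval wt (RT.replaceAt (ts ⟨i, hlt⟩) p s)) := by
          funext j
          rw [Function.update_apply]
          by_cases hj : j = (⟨i, hlt⟩ : Fin (ar r))
          · subst hj; simp
          · have : ¬ j.1 = i := fun hc => hj (Fin.ext hc)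
            simp [this, hj]
        have hx : (fun j => wtval wt (ts j))
            = Function.update (fun j => wtval wt (ts j)) ⟨i, hlt⟩
              (wtval wt (ts ⟨i, hlt⟩)) := by
          rw [Function.update_eq_self]
        show wtval wt (RT.node r fun j => if j.1 = i then RT.replaceAt (ts j) p s else ts j)
          ≤ wtval wt (RT.node r ts)
        simp only [wtval]
        rw [key]
        conv_rhs => rw [hx]
        exact hmono _ _ _ _ _ (ih _ _ _ h hs)
      · exact absurd h (by simp)

lemma wtval_cutW_le
    (hmono : ∀ (r : R) (x : Fin (ar r) → K) (i : Fin (ar r)) (a b : K), a ≤ b →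
      wt r (Function.update x i a) ≤ wt r (Function.update x i b))
    (hsuper : ∀ (r : R) (x : Fin (ar r) → K) (i : Fin (ar r)), x i ≤ wt r x)
    {w : List R} {d d' : RT R ar}
    (h : CutW w d d') : wtval wt d' ≤ wtval wt d := by
  obtain ⟨p, q, t, s, h1, h2, h3, h4⟩ := h
  subst h4
  exact wtval_replaceAt_le wt hmono p d t s h1 (wtval_subAt_le wt hsuper q t s h2)

end Weights

lemma RTsize_cutW_lt {w : List R} (hw : 1 < w.length) {d d' : RT R ar}
    (h : CutW w d d') : RTsize d' < RTsize d := by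
  obtain ⟨p, q, t, s, h1, h2, h3, h4⟩ := h
  subst h4
  have hq : q ≠ [] := by
    intro hc
    subst hc
    have := seqTo_length [] t w h3
    simp at this
    omega
  exact RTsize_replaceAt_lt p d t s h1 (RTsize_subAt_lt q t s hq h2)

end Aux

/-- Every weighted system whose weight algebra is a superior M-monoid is (0-)closed:
`(K, ⪯)` is a total order, the addition is binary minimum (so `0` is the greatest
element), the infinitary sum of any countable family is its infimum, and every operation
in `Ω` is superior. -/
theorem superior_implies_closed {N R K : Type} [Fintype N] [Nonempty N] [Fintype R]
    [LinearOrder K] [AddCommMonoid K]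
    (hadd : ∀ a b : K, a + b = min a b)
    (hzero_top : ∀ a : K, a ≤ 0)
    (S : InfSum K)
    (hinf : ∀ (I : Type) [Countable I] (f : I → K), IsGLB (Set.range f) (S.isum f))
    (Ω : ∀ n : ℕ, Set ((Fin n → K) → K)) (hΩ0 : HasZeroOps Ω) (hΩd : DistributiveOps Ω)
    (hsup : ∀ n : ℕ, ∀ ω ∈ Ω n,
      (∀ (x : Fin n → K) (i : Fin n) (a b : K), a ≤ b →
        ω (Function.update x i a) ≤ ω (Function.update x i b)) ∧
      ∀ (x : Fin n → K) (i : Fin n), x i ≤ ω x)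
    (lhs : R → N) (rhs : R → List N)
    (wt : ∀ r : R, (Fin (rhs r).length → K) → K) (hwt : ∀ r : R, wt r ∈ Ω (rhs r).length) :
    CClosed lhs rhs wt 0 := by
  intro d _hd w hw hp
  obtain ⟨p, _hleaf, ρ, hseq, hcyc, v, hρ, _⟩ := hp
  -- basic facts
  have hmono : ∀ (r : R) (x : Fin ((rhs r).length) → K) (i : Fin ((rhs r).length)) (a b : K),
      a ≤ b → wt r (Function.update x i a) ≤ wt r (Function.update x i b) :=
    fun r => (hsup _ _ (hwt r)).1
  have hsuper : ∀ (r : R) (x : Fin ((rhs r).length) → K) (i : Fin ((rhs r).length)),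
      x i ≤ wt r x := fun r => (hsup _ _ (hwt r)).2
  have hwlen : 1 < w.length := hw.1
  -- ρ = v 0 ++ (w ++ v 1)
  have hρ' : ρ = v 0 ++ (w ++ v 1) := by
    simpa [List.range_succ] using hρ
  have hlen : ρ.length = p.length + 1 := seqTo_length p d ρ hseq
  set n := (v 0).length with hn
  have hnle : n ≤ p.length := by
    have : ρ.length = n + (w.length + (v 1).length) := by
      rw [hρ']; simp; rfl
    omega
  obtain ⟨t, ht, htseq⟩ := seqTo_exists_sub p d ρ n hseq hnle
  have hdrop : ρ.drop n = w ++ v 1 := by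
    rw [hρ', hn, List.drop_left]
  rw [hdrop] at htseq
  set q' := p.drop n with hq'
  set j := w.length - 1 with hj
  have hseqw : RT.seqTo t (q'.take j) = some w := by
    have := seqTo_take q' t (w ++ v 1) j htseq
    rw [this]
    congr 1
    have : j + 1 = w.length := by omega
    rw [this, List.take_left]
  have hjle : j ≤ q'.length := by
    have h1 : q'.length = p.length - n := by rw [hq']; simp
    have h2 : ρ.length = n + (w.length + (v 1).length) := by
      rw [hρ']; simp; rfl
    omega
  obtain ⟨s, hs, _⟩ := seqTo_exists_sub q' t (w ++ v 1) j htseq hjle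
  have hcut : CutW w d (RT.replaceAt d (p.take n) s) :=
    ⟨p.take n, q'.take j, t, s, ht, hs, hseqw, rfl⟩
  have hne : RT.replaceAt d (p.take n) s ∈ cotreesW w d := Relation.TransGen.single hcut
  -- all cotrees have weight ≤ wtval d and size < size d
  have hbound : ∀ d' ∈ cotreesW w d, wtval wt d' ≤ wtval wt d := by
    intro d' hd'
    induction hd' with
    | single h => exact wtval_cutW_le wt hmono hsuper h
    | tail _ h ih => exact le_trans (wtval_cutW_le wt hmono hsuper h) ih
  have hsize : ∀ d' ∈ cotreesW w d, RTsize d' < RTsize d := by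
    intro d' hd'
    induction hd' with
    | single h => exact RTsize_cutW_lt hwlen h
    | tail _ h ih => exact lt_trans (RTsize_cutW_lt hwlen h) ih
  have hfin : (cotreesW w d).Finite :=
    (RT_finite_size_le (RTsize d)).subset fun d' hd' => le_of_lt (hsize d' hd')
  -- the finsum bound
  have hfin' : (cotreesW w d ∩ Function.support (wtval wt)).Finite :=
    hfin.inter_of_left _
  have hsumle : (∑ᶠ d' ∈ cotreesW w d, wtval wt d') ≤ wtval wt d := by
    rw [finsum_mem_eq_sum _ hfin']
    rcases Finset.eq_empty_or_nonempty hfin'.toFinset with he | ⟨a, ha⟩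
    · rw [he, Finset.sum_empty]
      have hz : wtval wt (RT.replaceAt d (p.take n) s) = 0 := by
        by_contra hc
        have : RT.replaceAt d (p.take n) s ∈ hfin'.toFinset := by
          rw [Set.Finite.mem_toFinset]
          exact ⟨hne, hc⟩
        rw [he] at this
        exact absurd this (Finset.notMem_empty _)
      have := hbound _ hne
      rw [hz] at this
      exact this
    · have ha' : a ∈ cotreesW w d ∩ Function.support (wtval wt) :=
        (Set.Finite.mem_toFinset _).mp ha
      have hle1 : (∑ x ∈ hfin'.toFinset, wtval wt x) ≤ wtval wt a := by
        rw [← Finset.add_sum_erase _ _ ha, hadd]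
        exact min_le_left _ _
      exact le_trans hle1 (hbound a ha'.1)
  rw [hadd]
  exact min_eq_right hsumle
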